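/- Every regular solution of the forced inviscid dyadic model satisfies the energy equality: if {a_j} is a solution on [0,T] with Σ_{j≥0} a_j(0)² < ∞ and sup_{t∈[0,T]} ‖a(t)‖_{H^{θ/3}} < ∞, then for all t ∈ [0,T], Σ_{j≥0} a_j(t)² = Σ_{j≥0} a_j(0)² + 2 f_0 ∫_0^t a_0(τ) dτ. -/

import Mathlib

open MeasureTheory Filter Topology
open scoped ENNReal

/-- The (possibly infinite) squared `H^s` norm of a sequence, with `λ_j = lam ^ j`:
`‖a‖_{H^s}² = Σ_j λ_j^{2s} a_j²`. -/
noncomputable def Hsq (lam s : ℝ) (a : ℕ → ℝ) : ℝ≥0∞ :=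
  ∑' j : ℕ, ENNReal.ofReal ((lam ^ j) ^ (2 * s) * (a j) ^ 2)

/-- A solution of the forced inviscid dyadic model on `[0,T]`:
`a_j' = λ_j^θ a_{j-1}² − λ_{j+1}^θ a_j a_{j+1} + f_j`, with `a_{-1} ≡ 0`,
`f_0 = f0 > 0` and `f_j = 0` for `j ≥ 1`. -/
def IsForcedSolOn (lam θ f0 T : ℝ) (a : ℕ → ℝ → ℝ) : Prop :=
  ∀ j : ℕ, ∀ t ∈ Set.Icc (0 : ℝ) T,
    HasDerivWithinAt (a j)
      ((lam ^ j) ^ θ * (if j = 0 then (0 : ℝ) else a (j - 1) t) ^ 2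
        - (lam ^ (j + 1)) ^ θ * a j t * a (j + 1) t
        + (if j = 0 then f0 else 0)) (Set.Icc 0 T) t

/-- auxiliary: `(lam^k)^s = lam^(k*s)` for rpow. -/
lemma pow_rpow_eq' {lam : ℝ} (hl : 0 < lam) (k : ℕ) (s : ℝ) :
    (lam ^ k) ^ s = lam ^ ((k : ℝ) * s) := by
  rw [← Real.rpow_natCast lam k, ← Real.rpow_mul hl.le]

/-- The flux through level `N`. -/
noncomputable def fluxFn (lam θ : ℝ) (a : ℕ → ℝ → ℝ) (N : ℕ) (τ : ℝ) : ℝ :=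
  (lam ^ (N + 1)) ^ θ * (a N τ) ^ 2 * a (N + 1) τ

/-- The telescoping summand. -/
noncomputable def Dfun (lam θ : ℝ) (a : ℕ → ℝ → ℝ) (x : ℝ) (j : ℕ) : ℝ :=
  2 * ((lam ^ j) ^ θ * (if j = 0 then (0 : ℝ) else a (j - 1) x) ^ 2 * a j x)

/-- Cheskidov–Friedlander–Pavlović: every regular solution of the forced inviscid
dyadic model satisfies the energy equality
`Σ_j a_j(t)² = Σ_j a_j(0)² + 2 f₀ ∫₀ᵗ a₀(τ) dτ`. -/
theorem forced_inviscid_energy_equality (lam θ f0 T : ℝ) (hlam : 1 < lam)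
    (hθ1 : 1 ≤ θ) (hθ2 : θ ≤ 5 / 2) (hf0 : 0 < f0) (hT : 0 < T)
    (a : ℕ → ℝ → ℝ) (hsol : IsForcedSolOn lam θ f0 T a)
    (hinit : Summable (fun j => (a j 0) ^ 2))
    (hreg : (⨆ t ∈ Set.Icc (0 : ℝ) T, Hsq lam (θ / 3) (fun j => a j t)) < ⊤) :
    ∀ t ∈ Set.Icc (0 : ℝ) T,
      (∑' j : ℕ, (a j t) ^ 2)
        = (∑' j : ℕ, (a j 0) ^ 2) + 2 * f0 * ∫ τ in (0 : ℝ)..t, a 0 τ := by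
  intro t ht
  obtain ⟨ht0, htT⟩ := ht
  have hl0 : (0:ℝ) < lam := lt_trans one_pos hlam
  have hθ0 : (0:ℝ) < θ := lt_of_lt_of_le one_pos hθ1
  set s : ℝ := θ / 3 with hs
  have hs0 : (0:ℝ) < s := by rw [hs]; positivity
  -- uniform bound
  have hSne : (⨆ τ ∈ Set.Icc (0:ℝ) T, Hsq lam s (fun j => a j τ)) ≠ ⊤ := hreg.ne
  set B : ℝ := (⨆ τ ∈ Set.Icc (0:ℝ) T, Hsq lam s (fun j => a j τ)).toReal with hBdef
  have hB0 : 0 ≤ B := ENNReal.toReal_nonneg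
  have hHle : ∀ τ ∈ Set.Icc (0:ℝ) T,
      Hsq lam s (fun j => a j τ) ≤ ⨆ τ ∈ Set.Icc (0:ℝ) T, Hsq lam s (fun j => a j τ) := by
    intro τ hτ
    exact le_iSup₂ (f := fun τ (_ : τ ∈ Set.Icc (0:ℝ) T) => Hsq lam s (fun j => a j τ)) τ hτ
  have hHne : ∀ τ ∈ Set.Icc (0:ℝ) T, Hsq lam s (fun j => a j τ) ≠ ⊤ :=
    fun τ hτ => ne_top_of_le_ne_top hSne (hHle τ hτ)
  have htermB : ∀ τ ∈ Set.Icc (0:ℝ) T, ∀ j : ℕ, (lam ^ j) ^ (2 * s) * a j τ ^ 2 ≤ B := by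
    intro τ hτ j
    have h1 : ENNReal.ofReal ((lam ^ j) ^ (2 * s) * a j τ ^ 2)
        ≤ ⨆ τ ∈ Set.Icc (0:ℝ) T, Hsq lam s (fun j => a j τ) := by
      refine le_trans ?_ (hHle τ hτ)
      exact ENNReal.le_tsum j
    exact (ENNReal.ofReal_le_iff_le_toReal hSne).mp h1
  have hsummW : ∀ τ ∈ Set.Icc (0:ℝ) T,
      Summable (fun j : ℕ => (lam ^ j) ^ (2 * s) * a j τ ^ 2) := by
    intro τ hτ
    have h := ENNReal.summable_toReal (f := fun j : ℕ =>
      ENNReal.ofReal ((lam ^ j) ^ (2 * s) * a j τ ^ 2)) (hHne τ hτ)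
    refine h.congr fun j => ?_
    refine ENNReal.toReal_ofReal ?_
    exact mul_nonneg (Real.rpow_nonneg (pow_nonneg hl0.le j) _) (sq_nonneg _)
  have hone_le : ∀ j : ℕ, (1:ℝ) ≤ (lam ^ j) ^ (2 * s) := by
    intro j
    exact Real.one_le_rpow (one_le_pow₀ hlam.le) (by positivity)
  have hsumm : ∀ τ ∈ Set.Icc (0:ℝ) T, Summable (fun j : ℕ => a j τ ^ 2) := by
    intro τ hτ
    refine Summable.of_nonneg_of_le (fun j => sq_nonneg _) (fun j => ?_) (hsummW τ hτ)
    nlinarith [hone_le j, sq_nonneg (a j τ)]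
  -- |a_j| ≤ √B / λ_j^s
  have hsqB : ∀ τ ∈ Set.Icc (0:ℝ) T, ∀ j : ℕ,
      (lam ^ j) ^ s * |a j τ| ≤ Real.sqrt B := by
    intro τ hτ j
    have hx0 : (0:ℝ) ≤ (lam ^ j) ^ s * |a j τ| :=
      mul_nonneg (Real.rpow_nonneg (pow_nonneg hl0.le j) _) (abs_nonneg _)
    rw [Real.le_sqrt hx0 hB0]
    have hexp : ((lam ^ j) ^ s) ^ (2:ℕ) = (lam ^ j) ^ (2 * s) := by
      rw [← Real.rpow_natCast ((lam ^ j) ^ s) 2, ← Real.rpow_mul (pow_nonneg hl0.le j)]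
      norm_num [mul_comm s 2]
    calc ((lam ^ j) ^ s * |a j τ|) ^ 2 = ((lam ^ j) ^ s) ^ (2:ℕ) * |a j τ| ^ 2 := by ring
      _ = (lam ^ j) ^ (2 * s) * a j τ ^ 2 := by rw [hexp, sq_abs]
      _ ≤ B := htermB τ hτ j
  -- key exponent identity
  have hkey : ∀ N : ℕ, (lam ^ (N+1)) ^ θ
      = lam ^ (2 * s) * ((lam ^ N) ^ (2 * s) * (lam ^ (N+1)) ^ s) := by
    intro N
    rw [pow_rpow_eq' hl0, pow_rpow_eq' hl0, pow_rpow_eq' hl0,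
      ← Real.rpow_add hl0, ← Real.rpow_add hl0]
    congr 1
    rw [hs]
    push_cast
    ring
  -- flux bound
  have hflux_bound : ∀ τ ∈ Set.Icc (0:ℝ) T, ∀ N : ℕ,
      |fluxFn lam θ a N τ| ≤ lam ^ (2 * s) * Real.sqrt B * ((lam ^ N) ^ (2 * s) * a N τ ^ 2) := by
    intro τ hτ N
    have hq : ∀ k : ℕ, ∀ e : ℝ, (0:ℝ) ≤ (lam ^ k) ^ e :=
      fun k e => Real.rpow_nonneg (pow_nonneg hl0.le k) _
    have h1 : |fluxFn lam θ a N τ|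
        = lam ^ (2 * s) * ((lam ^ N) ^ (2 * s) * a N τ ^ 2) * ((lam ^ (N+1)) ^ s * |a (N+1) τ|) := by
      have : |fluxFn lam θ a N τ| = (lam ^ (N+1)) ^ θ * a N τ ^ 2 * |a (N+1) τ| := by
        rw [fluxFn, abs_mul, abs_mul, abs_of_nonneg (hq (N+1) θ), abs_of_nonneg (sq_nonneg (a N τ))]
      rw [this, hkey N]; ring
    rw [h1]
    have h2 := hsqB τ hτ (N+1)
    have hnn : 0 ≤ lam ^ (2 * s) * ((lam ^ N) ^ (2 * s) * a N τ ^ 2) := by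
      refine mul_nonneg (Real.rpow_nonneg hl0.le _) (mul_nonneg (hq N _) (sq_nonneg _))
    calc lam ^ (2 * s) * ((lam ^ N) ^ (2 * s) * a N τ ^ 2) * ((lam ^ (N+1)) ^ s * |a (N+1) τ|)
        ≤ lam ^ (2 * s) * ((lam ^ N) ^ (2 * s) * a N τ ^ 2) * Real.sqrt B :=
          mul_le_mul_of_nonneg_left h2 hnn
      _ = lam ^ (2 * s) * Real.sqrt B * ((lam ^ N) ^ (2 * s) * a N τ ^ 2) := by ring
  -- pointwise convergence of the flux to zero
  have hptw : ∀ τ ∈ Set.Icc (0:ℝ) T,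
      Tendsto (fun N : ℕ => fluxFn lam θ a N τ) atTop (𝓝 0) := by
    intro τ hτ
    have h0 : Tendsto (fun N : ℕ => (lam ^ N) ^ (2 * s) * a N τ ^ 2) atTop (𝓝 0) :=
      (hsummW τ hτ).tendsto_atTop_zero
    have h1 := h0.const_mul (lam ^ (2 * s) * Real.sqrt B)
    rw [mul_zero] at h1
    refine squeeze_zero_norm (fun N => ?_) h1
    simpa [Real.norm_eq_abs, mul_assoc] using hflux_bound τ hτ N
  -- continuity facts
  have hcont : ∀ j, ContinuousOn (a j) (Set.Icc (0:ℝ) T) :=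
    fun j x hx => (hsol j x hx).continuousWithinAt
  have hContΦ : ∀ N, ContinuousOn (fluxFn lam θ a N) (Set.Icc (0:ℝ) T) := by
    intro N
    exact (continuousOn_const.mul ((hcont N).pow 2)).mul (hcont (N+1))
  have hIccsub : Set.Icc (0:ℝ) t ⊆ Set.Icc (0:ℝ) T := Set.Icc_subset_Icc le_rfl htT
  have hIocsub : Set.uIoc (0:ℝ) t ⊆ Set.Icc (0:ℝ) T := by
    rw [Set.uIoc_of_le ht0]
    exact fun x hx => ⟨hx.1.le, hx.2.trans htT⟩
  -- the flux integral tends to zero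
  have hflux_int : Tendsto (fun N : ℕ => ∫ τ in (0:ℝ)..t, fluxFn lam θ a N τ) atTop (𝓝 0) := by
    have h : Tendsto (fun N : ℕ => ∫ τ in (0:ℝ)..t, fluxFn lam θ a N τ) atTop
        (𝓝 (∫ τ in (0:ℝ)..t, (0:ℝ))) := by
      refine intervalIntegral.tendsto_integral_filter_of_dominated_convergence
        (fun _ => lam ^ (2 * s) * Real.sqrt B * B) ?_ ?_ ?_ ?_
      · refine Eventually.of_forall fun N => ?_
        exact ((hContΦ N).mono hIocsub).aestronglyMeasurable measurableSet_uIoc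
      · refine Eventually.of_forall fun N => ae_of_all _ fun x hx => ?_
        have hxT := hIocsub hx
        refine le_trans (by simpa [Real.norm_eq_abs] using hflux_bound x hxT N) ?_
        have hfac : (0:ℝ) ≤ lam ^ (2 * s) * Real.sqrt B :=
          mul_nonneg (Real.rpow_nonneg hl0.le _) (Real.sqrt_nonneg _)
        exact mul_le_mul_of_nonneg_left (htermB x hxT N) hfac
      · exact intervalIntegrable_const
      · exact ae_of_all _ fun x hx => hptw x (hIocsub hx)
    simpa using h
  -- derivative of partial energy sums
  have hderE : ∀ N : ℕ, ∀ x ∈ Set.Icc (0:ℝ) T,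
      HasDerivWithinAt (fun τ => ∑ j ∈ Finset.range (N+1), a j τ ^ 2)
        (2 * f0 * a 0 x - 2 * fluxFn lam θ a N x) (Set.Icc 0 T) x := by
    intro N x hx
    have h := HasDerivWithinAt.fun_sum (u := Finset.range (N+1))
      (A := fun j τ => a j τ ^ 2)
      (A' := fun j => ((2:ℕ):ℝ) * a j x ^ (2-1) *
        ((lam ^ j) ^ θ * (if j = 0 then (0:ℝ) else a (j - 1) x) ^ 2
          - (lam ^ (j + 1)) ^ θ * a j x * a (j + 1) x
          + (if j = 0 then f0 else 0)))
      (fun j _ => (hsol j x hx).pow 2)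
    refine h.congr_deriv ?_
    have key : ∀ j : ℕ, ((2:ℕ):ℝ) * a j x ^ (2-1) *
        ((lam ^ j) ^ θ * (if j = 0 then (0:ℝ) else a (j - 1) x) ^ 2
          - (lam ^ (j + 1)) ^ θ * a j x * a (j + 1) x
          + (if j = 0 then f0 else 0))
        = (Dfun lam θ a x j - Dfun lam θ a x (j+1))
          + (if j = 0 then 2 * f0 * a 0 x else 0) := by
      intro j
      cases j with
      | zero => simp [Dfun]; ring
      | succ k => simp [Dfun, Nat.succ_ne_zero]; ring
    symm
    calc 2 * f0 * a 0 x - 2 * fluxFn lam θ a N x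
        = (Dfun lam θ a x 0 - Dfun lam θ a x (N+1)) + 2 * f0 * a 0 x := by
          simp [Dfun, fluxFn]; ring
      _ = (∑ j ∈ Finset.range (N+1), (Dfun lam θ a x j - Dfun lam θ a x (j+1)))
            + ∑ j ∈ Finset.range (N+1), (if j = 0 then 2 * f0 * a 0 x else 0) := by
          rw [Finset.sum_range_sub' (fun j => Dfun lam θ a x j) (N+1),
            Finset.sum_ite_eq' (Finset.range (N+1)) 0 (fun _ => 2 * f0 * a 0 x)]
          simp
      _ = _ := by
          rw [← Finset.sum_add_distrib]
          exact Finset.sum_congr rfl fun j _ => (key j).symm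
  -- FTC on [0, t]
  have hFTC : ∀ N : ℕ,
      (∑ j ∈ Finset.range (N+1), a j t ^ 2) - (∑ j ∈ Finset.range (N+1), a j 0 ^ 2)
        = 2 * f0 * (∫ τ in (0:ℝ)..t, a 0 τ) - 2 * ∫ τ in (0:ℝ)..t, fluxFn lam θ a N τ := by
    intro N
    have hcontE : ContinuousOn (fun τ => ∑ j ∈ Finset.range (N+1), a j τ ^ 2)
        (Set.Icc (0:ℝ) t) := by
      refine ContinuousOn.mono ?_ hIccsub
      exact continuousOn_finset_sum _ fun j _ => (hcont j).pow 2
    have hderiv : ∀ x ∈ Set.Ioo (0:ℝ) t,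
        HasDerivWithinAt (fun τ => ∑ j ∈ Finset.range (N+1), a j τ ^ 2)
          (2 * f0 * a 0 x - 2 * fluxFn lam θ a N x) (Set.Ioi x) x := by
      intro x hx
      have hxm : Set.Icc (0:ℝ) T ∈ 𝓝 x := Icc_mem_nhds hx.1 (lt_of_lt_of_le hx.2 htT)
      exact ((hderE N x ⟨hx.1.le, hx.2.le.trans htT⟩).hasDerivAt hxm).hasDerivWithinAt
    have hint1 : IntervalIntegrable (fun x => 2 * f0 * a 0 x) volume 0 t := by
      apply ContinuousOn.intervalIntegrable
      rw [Set.uIcc_of_le ht0]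
      exact continuousOn_const.mul ((hcont 0).mono hIccsub)
    have hint2 : IntervalIntegrable (fun x => 2 * fluxFn lam θ a N x) volume 0 t := by
      apply ContinuousOn.intervalIntegrable
      rw [Set.uIcc_of_le ht0]
      exact continuousOn_const.mul ((hContΦ N).mono hIccsub)
    have hint : IntervalIntegrable (fun x => 2 * f0 * a 0 x - 2 * fluxFn lam θ a N x)
        volume 0 t := hint1.sub hint2
    have hmain := intervalIntegral.integral_eq_sub_of_hasDeriv_right_of_le ht0 hcontE hderiv hint
    rw [intervalIntegral.integral_sub hint1 hint2, intervalIntegral.integral_const_mul,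
      intervalIntegral.integral_const_mul] at hmain
    linarith [hmain]
  -- pass to the limit
  have hlim_t : Tendsto (fun N : ℕ => ∑ j ∈ Finset.range (N+1), a j t ^ 2) atTop
      (𝓝 (∑' j : ℕ, a j t ^ 2)) :=
    ((hsumm t ⟨ht0, htT⟩).hasSum.tendsto_sum_nat).comp (tendsto_add_atTop_nat 1)
  have hlim_0 : Tendsto (fun N : ℕ => ∑ j ∈ Finset.range (N+1), a j 0 ^ 2) atTop
      (𝓝 (∑' j : ℕ, a j 0 ^ 2)) :=
    (hinit.hasSum.tendsto_sum_nat).comp (tendsto_add_atTop_nat 1)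
  have hL : Tendsto (fun N : ℕ =>
      (∑ j ∈ Finset.range (N+1), a j t ^ 2) - (∑ j ∈ Finset.range (N+1), a j 0 ^ 2)) atTop
      (𝓝 ((∑' j : ℕ, a j t ^ 2) - ∑' j : ℕ, a j 0 ^ 2)) := hlim_t.sub hlim_0
  have hR : Tendsto (fun N : ℕ =>
      2 * f0 * (∫ τ in (0:ℝ)..t, a 0 τ) - 2 * ∫ τ in (0:ℝ)..t, fluxFn lam θ a N τ) atTop
      (𝓝 (2 * f0 * (∫ τ in (0:ℝ)..t, a 0 τ) - 2 * 0)) :=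
    tendsto_const_nhds.sub (hflux_int.const_mul 2)
  have heq := tendsto_nhds_unique (hL.congr fun N => hFTC N) hR
  rw [mul_zero] at heq
  linarith [heq]
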